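/- arXiv:math/0302071 — 2 statements merged into one kernel-verified Lean document; each statement's English description precedes it below -/
import Mathlib

section
/- (The paper's Lemma on theta functions, rank-one case.) Fix s > 0, let q = e^{−s}, and let γ(λ) := Σ_{n∈ℤ} e^{−sn²/2} e^{−sλn}. Then for every continuous function f : ℝ → ℂ which is periodic with period 2π/s and every ξ ∈ ℝ, the integral on the left converges absolutely and √(s/(2π)) ∫_{−∞}^{+∞} f(t) · e^{s(ξ+it)²/2} dt = (s/(2π)) ∫₀^{2π/s} f(t) · γ(ξ+it) dt. (The left side is ∫_{C_ξ} f q^{−λ²/2} dλ with the measure on C_ξ = {ξ+it} normalized so that ∫_{C_ξ} q^{−λ²/2} dλ = 1; the right side is ∫_{C_ξ/κQ∨} f γ dλ with the probability measure on the torus.) -/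
open MeasureTheory Finset Filter

/-- The theta function `γ(λ) = Σ_{n∈ℤ} e^{−sn²/2} e^{−sλn}`. -/
noncomputable def theta (s : ℝ) (lam : ℂ) : ℂ :=
  ∑' n : ℤ, Complex.exp (-(s : ℂ) * (n : ℂ) ^ 2 / 2) * Complex.exp (-(s : ℂ) * lam * (n : ℂ))

lemma theta_key (s : ℝ) (hs : 0 < s) (lam : ℂ) :
    ∑' k : ℤ, Complex.exp ((s : ℂ) * (lam + Complex.I * ((k : ℂ) * (2 * Real.pi / s))) ^ 2 / 2)
      = (Real.sqrt (s / (2 * Real.pi)) : ℂ) * theta s lam := by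
  have hπ : (0 : ℝ) < Real.pi := Real.pi_pos
  have ha : (0 : ℝ) < s / (2 * Real.pi) := by positivity
  have ha' : (0 : ℝ) < ((((s / (2 * Real.pi) : ℝ)) : ℂ)).re := by rw [Complex.ofReal_re]; exact ha
  have hπc : ((Real.pi : ℝ) : ℂ) ≠ 0 := Complex.ofReal_ne_zero.mpr Real.pi_ne_zero
  have hsc : (s : ℂ) ≠ 0 := Complex.ofReal_ne_zero.mpr hs.ne'
  have h := Complex.tsum_exp_neg_quadratic ha' (-(s : ℂ) * lam / (2 * (Real.pi : ℂ)))
  have hL : (∑' n : ℤ, Complex.exp (-(Real.pi : ℂ) * (((s / (2 * Real.pi) : ℝ)) : ℂ) * (n : ℂ) ^ 2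
        + 2 * (Real.pi : ℂ) * (-(s : ℂ) * lam / (2 * (Real.pi : ℂ))) * (n : ℂ)))
      = theta s lam := by
    unfold theta
    refine tsum_congr fun n => ?_
    rw [← Complex.exp_add]
    congr 1
    push_cast
    field_simp
  have hR : (∑' n : ℤ, Complex.exp (-(Real.pi : ℂ) / (((s / (2 * Real.pi) : ℝ)) : ℂ)
        * ((n : ℂ) + Complex.I * (-(s : ℂ) * lam / (2 * (Real.pi : ℂ)))) ^ 2))
      = ∑' k : ℤ, Complex.exp ((s : ℂ) * (lam + Complex.I * ((k : ℂ) * (2 * Real.pi / s))) ^ 2 / 2) := by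
    refine tsum_congr fun n => ?_
    congr 1
    have hsq1 : ((n : ℂ) + Complex.I * (-(s : ℂ) * lam / (2 * (Real.pi : ℂ)))) ^ 2
        = (n : ℂ) ^ 2 + 2 * (n : ℂ) * Complex.I * (-(s : ℂ) * lam / (2 * (Real.pi : ℂ)))
          - (-(s : ℂ) * lam / (2 * (Real.pi : ℂ))) ^ 2 := by
      linear_combination ((-(s : ℂ) * lam / (2 * (Real.pi : ℂ))) ^ 2) * Complex.I_sq
    have hsq2 : (lam + Complex.I * ((n : ℂ) * (2 * (Real.pi : ℂ) / (s : ℂ)))) ^ 2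
        = lam ^ 2 + 2 * lam * Complex.I * ((n : ℂ) * (2 * (Real.pi : ℂ) / (s : ℂ)))
          - ((n : ℂ) * (2 * (Real.pi : ℂ) / (s : ℂ))) ^ 2 := by
      linear_combination (((n : ℂ) * (2 * (Real.pi : ℂ) / (s : ℂ))) ^ 2) * Complex.I_sq
    push_cast
    rw [hsq1, hsq2]
    field_simp
    ring
  have h12 : ((((s / (2 * Real.pi) : ℝ)) : ℂ)) ^ (1 / 2 : ℂ)
      = ((Real.sqrt (s / (2 * Real.pi)) : ℝ) : ℂ) := by
    rw [show ((1 : ℂ) / 2) = (((1 / 2 : ℝ)) : ℂ) by norm_num, ← Complex.ofReal_cpow ha.le,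
      ← Real.sqrt_eq_rpow]
  rw [hL, hR, h12] at h
  have hne : ((Real.sqrt (s / (2 * Real.pi)) : ℝ) : ℂ) ≠ 0 := by
    exact_mod_cast Complex.ofReal_ne_zero.mpr (Real.sqrt_pos.mpr ha).ne'
  rw [h, ← mul_assoc, mul_one_div, div_self hne, one_mul]

lemma shift_integral {E : Type*} [NormedAddCommGroup E] [NormedSpace ℝ E] (h : ℝ → E)
    (k T : ℝ) (hT : 0 ≤ T) :
    ∫ t in Set.Ioc (k * T) (k * T + T), h t = ∫ t in Set.Ioc (0 : ℝ) T, h (t + k * T) := by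
  rw [← intervalIntegral.integral_of_le (by linarith : k * T ≤ k * T + T),
    ← intervalIntegral.integral_of_le hT,
    intervalIntegral.integral_comp_add_right h (k * T), zero_add, add_comm T (k * T)]


/-- **Lemma on theta functions** (rank-one case): the Gaussian integral over the
cycle `C_ξ` of a periodic function equals the integral over the torus against
the theta function. -/
theorem theta_lemma (s : ℝ) (hs : 0 < s) (f : ℝ → ℂ) (hf : Continuous f)
    (hper : Function.Periodic f (2 * Real.pi / s)) (ξ : ℝ) :
    Integrable (fun t : ℝ =>
      f t * Complex.exp ((s : ℂ) * ((ξ : ℂ) + Complex.I * (t : ℂ)) ^ 2 / 2)) ∧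
    ((Real.sqrt (s / (2 * Real.pi)) : ℝ) : ℂ) *
        ∫ t : ℝ, f t * Complex.exp ((s : ℂ) * ((ξ : ℂ) + Complex.I * (t : ℂ)) ^ 2 / 2) =
      ((s / (2 * Real.pi) : ℝ) : ℂ) *
        ∫ t in (0 : ℝ)..(2 * Real.pi / s), f t * theta s ((ξ : ℂ) + Complex.I * (t : ℂ)) := by
  have hπ : (0 : ℝ) < Real.pi := Real.pi_pos
  set T : ℝ := 2 * Real.pi / s with hT_def
  have hT : 0 < T := by positivity
  set z : ℝ → ℂ := fun u => (s : ℂ) * ((ξ : ℂ) + Complex.I * (u : ℂ)) ^ 2 / 2 with hz_def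
  have hz_cont : Continuous z := by
    rw [hz_def]; fun_prop
  have hnorm : ∀ u : ℝ, ‖Complex.exp (z u)‖ = Real.exp (s * (ξ ^ 2 - u ^ 2) / 2) := by
    intro u
    have hzu : z u = ((s * (ξ ^ 2 - u ^ 2) / 2 : ℝ) : ℂ) + ((s * ξ * u : ℝ) : ℂ) * Complex.I := by
      rw [hz_def]
      push_cast
      linear_combination ((s : ℂ) * (u : ℂ) ^ 2 / 2) * Complex.I_sq
    rw [hzu, Complex.exp_add, norm_mul]
    simp [Complex.norm_exp, ← Complex.ofReal_pow]
  obtain ⟨C, hC⟩ : ∃ C, ∀ u : ℝ, ‖f u‖ ≤ C := by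
    obtain ⟨C, hC⟩ :=
      (isCompact_Icc (a := (0:ℝ)) (b := T)).exists_bound_of_continuousOn hf.continuousOn
    refine ⟨C, fun u => ?_⟩
    obtain ⟨y, hy, hyu⟩ := hper.exists_mem_Ico₀ hT u
    rw [hyu]
    exact hC y ⟨hy.1, hy.2.le⟩
  set g : ℝ → ℂ := fun t => f t * Complex.exp (z t) with hg_def
  have hg_cont : Continuous g := hf.mul (Complex.continuous_exp.comp hz_cont)
  have h_int : Integrable g := by
    have h1 : Integrable (fun t : ℝ =>
        (C * Real.exp (s * ξ ^ 2 / 2)) * Real.exp (-(s / 2) * t ^ 2)) :=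
      (integrable_exp_neg_mul_sq (by positivity : (0:ℝ) < s / 2)).const_mul _
    refine h1.mono' hg_cont.aestronglyMeasurable (Filter.Eventually.of_forall fun t => ?_)
    calc ‖g t‖ = ‖f t‖ * Real.exp (s * (ξ ^ 2 - t ^ 2) / 2) := by
          rw [hg_def]; rw [norm_mul, hnorm]
      _ ≤ C * Real.exp (s * (ξ ^ 2 - t ^ 2) / 2) :=
          mul_le_mul_of_nonneg_right (hC t) (Real.exp_pos _).le
      _ = C * Real.exp (s * ξ ^ 2 / 2) * Real.exp (-(s / 2) * t ^ 2) := by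
          rw [mul_assoc, ← Real.exp_add]; ring_nf
  set Sset : ℤ → Set ℝ := fun k => Set.Ioc ((k : ℝ) * T) ((k : ℝ) * T + T) with hSset_def
  have hmeas : ∀ k : ℤ, MeasurableSet (Sset k) := fun k => measurableSet_Ioc
  have hfun : (fun n : ℤ => Set.Ioc ((0:ℝ) + n • T) (0 + (n + 1) • T)) = Sset := by
    funext n
    rw [hSset_def]
    congr 1 <;> (push_cast [zsmul_eq_mul]; ring)
  have hdisj : Pairwise (Function.onFun Disjoint Sset) := by
    have h0 := Set.pairwise_disjoint_Ioc_add_zsmul (0 : ℝ) T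
    rwa [hfun] at h0
  have hUnion : (⋃ k : ℤ, Sset k) = Set.univ := by
    have h0 := iUnion_Ioc_add_zsmul hT 0
    rwa [hfun] at h0
  have hsum_g : HasSum (fun k : ℤ => ∫ t in Sset k, g t) (∫ t : ℝ, g t) := by
    have h0 := MeasureTheory.hasSum_integral_iUnion hmeas hdisj
      (by rw [hUnion]; exact h_int.integrableOn)
    rwa [hUnion, Measure.restrict_univ] at h0
  have hsum_norm : HasSum (fun k : ℤ => ∫ t in Sset k, ‖g t‖) (∫ t : ℝ, ‖g t‖) := by
    have h0 := MeasureTheory.hasSum_integral_iUnion (s := Sset) hmeas hdisj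
      (f := fun t => ‖g t‖) (by rw [hUnion]; exact h_int.norm.integrableOn)
    rwa [hUnion, Measure.restrict_univ] at h0
  have hstep : ∀ k : ℤ, ∫ t in Sset k, g t
      = ∫ t in Set.Ioc (0 : ℝ) T, f t * Complex.exp (z (t + (k : ℝ) * T)) := by
    intro k
    rw [hSset_def]
    rw [shift_integral g (k : ℝ) T hT.le]
    refine MeasureTheory.setIntegral_congr_fun measurableSet_Ioc fun t _ => ?_
    rw [hg_def]
    simp only
    rw [(hper.int_mul k) t]
  have hstep' : ∀ k : ℤ, ∫ t in Sset k, ‖g t‖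
      = ∫ t in Set.Ioc (0 : ℝ) T, ‖f t * Complex.exp (z (t + (k : ℝ) * T))‖ := by
    intro k
    rw [hSset_def]
    rw [shift_integral (fun t => ‖g t‖) (k : ℝ) T hT.le]
    refine MeasureTheory.setIntegral_congr_fun measurableSet_Ioc fun t _ => ?_
    simp only [hg_def]
    rw [(hper.int_mul k) t]
  have hGk_int : ∀ k : ℤ, IntegrableOn
      (fun t => f t * Complex.exp (z (t + (k : ℝ) * T))) (Set.Ioc (0 : ℝ) T) := by
    intro k
    exact (hf.mul (Complex.continuous_exp.comp
      (hz_cont.comp (continuous_id.add continuous_const)))).integrableOn_Ioc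
  have hsummable : Summable fun k : ℤ =>
      ∫ t in Set.Ioc (0 : ℝ) T, ‖f t * Complex.exp (z (t + (k : ℝ) * T))‖ :=
    hsum_norm.summable.congr fun k => hstep' k
  have hswap : ∑' k : ℤ, ∫ t in Set.Ioc (0 : ℝ) T, f t * Complex.exp (z (t + (k : ℝ) * T))
      = ∫ t in Set.Ioc (0 : ℝ) T, ∑' k : ℤ, f t * Complex.exp (z (t + (k : ℝ) * T)) :=
    MeasureTheory.integral_tsum_of_summable_integral_norm hGk_int hsummable
  have hpt : ∀ t : ℝ, (∑' k : ℤ, f t * Complex.exp (z (t + (k : ℝ) * T)))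
      = ((Real.sqrt (s / (2 * Real.pi)) : ℝ) : ℂ)
        * (f t * theta s ((ξ : ℂ) + Complex.I * (t : ℂ))) := by
    intro t
    rw [tsum_mul_left]
    have hexp : ∀ k : ℤ, z (t + (k : ℝ) * T)
        = (s : ℂ) * ((((ξ : ℂ) + Complex.I * (t : ℂ)))
            + Complex.I * ((k : ℂ) * (2 * Real.pi / s))) ^ 2 / 2 := by
      intro k
      rw [hz_def]
      simp only [hT_def]
      push_cast
      ring
    simp_rw [hexp]
    rw [theta_key s hs ((ξ : ℂ) + Complex.I * (t : ℂ))]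
    ring
  refine ⟨h_int, ?_⟩
  calc ((Real.sqrt (s / (2 * Real.pi)) : ℝ) : ℂ) * ∫ t : ℝ, g t
      = ((Real.sqrt (s / (2 * Real.pi)) : ℝ) : ℂ) * ∑' k : ℤ, ∫ t in Sset k, g t := by
        rw [hsum_g.tsum_eq]
    _ = ((Real.sqrt (s / (2 * Real.pi)) : ℝ) : ℂ) * ∑' k : ℤ,
          ∫ t in Set.Ioc (0 : ℝ) T, f t * Complex.exp (z (t + (k : ℝ) * T)) := by
        rw [tsum_congr hstep]
    _ = ((Real.sqrt (s / (2 * Real.pi)) : ℝ) : ℂ) * ∫ t in Set.Ioc (0 : ℝ) T,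
          ∑' k : ℤ, f t * Complex.exp (z (t + (k : ℝ) * T)) := by rw [hswap]
    _ = ((Real.sqrt (s / (2 * Real.pi)) : ℝ) : ℂ) * ∫ t in Set.Ioc (0 : ℝ) T,
          ((Real.sqrt (s / (2 * Real.pi)) : ℝ) : ℂ)
            * (f t * theta s ((ξ : ℂ) + Complex.I * (t : ℂ))) := by
        congr 1
        exact MeasureTheory.setIntegral_congr_fun measurableSet_Ioc fun t _ => hpt t
    _ = ((s / (2 * Real.pi) : ℝ) : ℂ) * ∫ t in Set.Ioc (0 : ℝ) T,
          f t * theta s ((ξ : ℂ) + Complex.I * (t : ℂ)) := by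
        rw [MeasureTheory.integral_const_mul, ← mul_assoc, ← Complex.ofReal_mul,
          Real.mul_self_sqrt (by positivity)]
    _ = ((s / (2 * Real.pi) : ℝ) : ℂ) * ∫ t in (0 : ℝ)..T,
          f t * theta s ((ξ : ℂ) + Complex.I * (t : ℂ)) := by
        rw [intervalIntegral.integral_of_le hT.le]
end

section
/- (Kostant's theta-function identity, stated in the paper, written out for g = sl₂.) Let 0 < q < 1 and let λ ∈ ℂ with q^λ ≠ q^{−λ}. Then both series below converge absolutely and Σ_{n∈ℤ} q^{n²/2} q^{λn} = (1 − q²) · Σ_{m=0}^{∞} q^{m(m+2)/2} · ((q^{(m+1)λ} − q^{−(m+1)λ})/(q^λ − q^{−λ})) · ((q^{m+1} − q^{−(m+1)})/(q − q^{−1})). (On the right, (q^{(m+1)λ} − q^{−(m+1)λ})/(q^λ − q^{−λ}) is the character χ_m(q^{2λ}) of the (m+1)-dimensional irreducible sl₂-representation and (q^{m+1} − q^{−m−1})/(q − q^{−1}) = [m+1]_q is its quantum dimension.) -/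
open MeasureTheory Finset Filter

/-- `qc q z = q^z := e^{z·log q}` for a real base `q > 0` and complex exponent. -/
noncomputable def qc (q : ℝ) (z : ℂ) : ℂ := Complex.exp ((Real.log q : ℂ) * z)

lemma qc_mul (q : ℝ) (x y : ℂ) : qc q x * qc q y = qc q (x + y) := by
  simp [qc, mul_add, Complex.exp_add]

noncomputable def kB (q : ℝ) (μ c : ℂ) (n : ℤ) : ℂ := qc q ((n:ℂ)^2/2 + μ*n + c)

lemma sumB {q : ℝ} (hq0 : 0 < q) (hq1 : q < 1) (μ c : ℂ) : Summable (kB q μ c) := by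
  have hL : Real.log q < 0 := Real.log_neg hq0 hq1
  set L : ℝ := Real.log q with hLdef
  have hπ : (2*(Real.pi:ℂ)*Complex.I) ≠ 0 := by
    simp [Real.pi_ne_zero, Complex.I_ne_zero]
  have key : Summable (fun n : ℤ =>
      jacobiTheta₂_term n ((L:ℂ)*μ/(2*Real.pi*Complex.I)) ((L:ℂ)/(2*Real.pi*Complex.I))) := by
    rw [summable_jacobiTheta₂_term_iff]
    have : ((L:ℂ)/(2*Real.pi*Complex.I)) = ((-L/(2*Real.pi) : ℝ) : ℂ) * Complex.I := by
      rw [div_eq_iff hπ]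
      push_cast
      field_simp
      ring_nf
      rw [Complex.I_sq]
      ring
    rw [this, Complex.mul_I_im, Complex.ofReal_re]
    apply div_pos (by linarith) (by positivity)
  refine (key.mul_right (qc q c)).congr (fun n => ?_)
  simp only [jacobiTheta₂_term, qc, kB, ← Complex.exp_add]
  congr 1
  field_simp
  ring

lemma sumBnat {q : ℝ} (hq0 : 0 < q) (hq1 : q < 1) (μ c : ℂ) :
    Summable (fun n : ℕ => qc q ((n:ℂ)^2/2 + μ*n + c)) := by
  have hinj : Function.Injective (Int.ofNat) := fun a b hab => by simpa using hab
  refine ((sumB hq0 hq1 μ c).comp_injective hinj).congr fun n => ?_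
  simp [kB, Function.comp]

lemma tsumB_down (q : ℝ) (μ c : ℂ) :
    ∑' n : ℤ, kB q μ c n = ∑' n : ℤ, kB q (μ-1) (c - μ + 1/2) n := by
  rw [← (Equiv.subRight (1:ℤ)).tsum_eq (kB q μ c)]
  refine (tsum_congr fun m => ?_).symm
  simp only [kB, qc, Equiv.subRight_apply]
  congr 1
  push_cast
  ring

lemma tsumB_up (q : ℝ) (μ c : ℂ) :
    ∑' n : ℤ, kB q μ c n = ∑' n : ℤ, kB q (μ+1) (c + μ + 1/2) n := by
  rw [← (Equiv.addRight (1:ℤ)).tsum_eq (kB q μ c)]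
  refine (tsum_congr fun m => ?_).symm
  simp only [kB, qc, Equiv.coe_addRight]
  congr 1
  push_cast
  ring

lemma step1 (q : ℝ) (lam : ℂ) (n : ℤ) :
    (qc q ((n:ℂ)^2/2) * qc q (lam*(n:ℂ))) * ((qc q lam - qc q (-lam)) * (qc q 1 - qc q (-1))) =
    kB q lam (lam+1) n - kB q lam (lam-1) n - kB q lam (1-lam) n + kB q lam (-1-lam) n := by
  simp only [kB, qc, ← Complex.exp_add]
  ring_nf
  simp only [← Complex.exp_add]
  ring_nf

noncomputable def kF (q : ℝ) (lam : ℂ) (m : ℤ) : ℂ :=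
  kB q (lam-1) (3/2) m - kB q (lam-1) (-1/2) m - kB q (lam+1) (3/2) m + kB q (lam+1) (-1/2) m

noncomputable def kU (q : ℝ) (lam : ℂ) (m : ℕ) : ℂ :=
  qc q ((m:ℂ)*((m:ℂ)+2)/2) * (qc q (((m:ℂ)+1)*lam) - qc q (-(((m:ℂ)+1)*lam))) *
    (qc q ((m:ℂ)+1) - qc q (-((m:ℂ)+1)))

lemma kU_eq (q : ℝ) (lam : ℂ) (m : ℕ) : kU q lam m =
    qc q ((m:ℂ)^2/2 + (lam+2)*m + (lam+1)) - qc q ((m:ℂ)^2/2 + lam*m + (lam-1))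
    - qc q ((m:ℂ)^2/2 + (2-lam)*m + (1-lam)) + qc q ((m:ℂ)^2/2 + (-lam)*m + (-lam-1)) := by
  simp only [kU, qc, ← Complex.exp_add]
  ring_nf
  simp only [← Complex.exp_add]
  ring_nf

lemma sumU {q : ℝ} (hq0 : 0 < q) (hq1 : q < 1) (lam : ℂ) : Summable (kU q lam) := by
  refine Summable.congr ?_ (fun m => (kU_eq q lam m).symm)
  exact (((sumBnat hq0 hq1 _ _).sub (sumBnat hq0 hq1 _ _)).sub (sumBnat hq0 hq1 _ _)).add
    (sumBnat hq0 hq1 _ _)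

lemma kF_zero (q : ℝ) (lam : ℂ) : kF q lam 0 = 0 := by
  simp only [kF, kB, Int.cast_zero]
  ring_nf

lemma qc_one {q : ℝ} (hq0 : 0 < q) : qc q 1 = (q:ℂ) := by
  rw [qc, mul_one, ← Complex.ofReal_exp, Real.exp_log hq0]

lemma qc_two {q : ℝ} (hq0 : 0 < q) : qc q 2 = (q:ℂ)^2 := by
  rw [show (2:ℂ) = 1 + 1 by norm_num, ← qc_mul, qc_one hq0, sq]

lemma qc_neg_one {q : ℝ} (hq0 : 0 < q) : qc q (-1) = ((q⁻¹:ℝ):ℂ) := by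
  rw [qc, mul_neg_one, ← Complex.ofReal_neg, ← Complex.ofReal_exp, Real.exp_neg,
    Real.exp_log hq0]

lemma kFU {q : ℝ} (hq0 : 0 < q) (lam : ℂ) (n : ℕ) :
    kF q lam ((n:ℤ)+1) + kF q lam (-((n:ℤ)+1)) = (1 - (q:ℂ)^2) * kU q lam n := by
  rw [← qc_two hq0]
  simp only [kF, kB, kU, qc, ← Complex.exp_add]
  push_cast
  ring_nf
  simp only [← Complex.exp_add]
  ring_nf


/-- **Kostant's theta-function identity** for `sl₂`: the theta function expands
as a sum over dominant weights of characters times quantum dimensions. -/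
theorem kostant_identity (q : ℝ) (hq0 : 0 < q) (hq1 : q < 1) (lam : ℂ)
    (h : qc q lam ≠ qc q (-lam)) :
    Summable (fun n : ℤ => qc q ((n : ℂ) ^ 2 / 2) * qc q (lam * (n : ℂ))) ∧
    Summable (fun m : ℕ =>
      qc q ((m : ℂ) * ((m : ℂ) + 2) / 2) *
        ((qc q (((m : ℂ) + 1) * lam) - qc q (-(((m : ℂ) + 1) * lam))) /
          (qc q lam - qc q (-lam))) *
        ((qc q ((m : ℂ) + 1) - qc q (-((m : ℂ) + 1))) / (qc q 1 - qc q (-1)))) ∧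
    ∑' n : ℤ, qc q ((n : ℂ) ^ 2 / 2) * qc q (lam * (n : ℂ)) =
      (1 - (q : ℂ) ^ 2) *
        ∑' m : ℕ,
          qc q ((m : ℂ) * ((m : ℂ) + 2) / 2) *
            ((qc q (((m : ℂ) + 1) * lam) - qc q (-(((m : ℂ) + 1) * lam))) /
              (qc q lam - qc q (-lam))) *
            ((qc q ((m : ℂ) + 1) - qc q (-((m : ℂ) + 1))) / (qc q 1 - qc q (-1))) := by
  have hP : qc q lam - qc q (-lam) ≠ 0 := sub_ne_zero.mpr h
  have hQ : qc q 1 - qc q (-1) ≠ 0 := by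
    rw [qc_one hq0, qc_neg_one hq0]
    refine sub_ne_zero.mpr ?_
    exact_mod_cast ne_of_lt (hq1.trans ((one_lt_inv₀ hq0).2 hq1))
  set P := qc q lam - qc q (-lam) with hPdef
  set Q := qc q 1 - qc q (-1) with hQdef
  have hPQ : P * Q ≠ 0 := mul_ne_zero hP hQ
  have sA : Summable (fun n : ℤ => qc q ((n : ℂ) ^ 2 / 2) * qc q (lam * (n : ℂ))) := by
    refine Summable.congr (sumB hq0 hq1 lam 0) fun n => ?_
    rw [kB, qc_mul]
    ring_nf
  have hT : ∀ m : ℕ,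
      qc q ((m : ℂ) * ((m : ℂ) + 2) / 2) *
        ((qc q (((m : ℂ) + 1) * lam) - qc q (-(((m : ℂ) + 1) * lam))) / P) *
        ((qc q ((m : ℂ) + 1) - qc q (-((m : ℂ) + 1))) / Q) = kU q lam m / (P * Q) := by
    intro m
    rw [kU]
    field_simp
  have sU := sumU hq0 hq1 lam
  have sT : Summable (fun m : ℕ =>
      qc q ((m : ℂ) * ((m : ℂ) + 2) / 2) *
        ((qc q (((m : ℂ) + 1) * lam) - qc q (-(((m : ℂ) + 1) * lam))) / P) *
        ((qc q ((m : ℂ) + 1) - qc q (-((m : ℂ) + 1))) / Q)) :=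
    (sU.div_const (P * Q)).congr fun m => (hT m).symm
  refine ⟨sA, sT, ?_⟩
  have sFZ : Summable (kF q lam) :=
    (((sumB hq0 hq1 _ _).sub (sumB hq0 hq1 _ _)).sub (sumB hq0 hq1 _ _)).add (sumB hq0 hq1 _ _)
  have hinj1 : Function.Injective (fun n : ℕ => (n:ℤ)+1) := fun a b hab => by
    simpa using hab
  have hinj2 : Function.Injective (fun n : ℕ => -((n:ℤ)+1)) := fun a b hab => by
    simp only at hab; omega
  have sF1 : Summable (fun n : ℕ => kF q lam ((n:ℤ)+1)) := sFZ.comp_injective hinj1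
  have sF2 : Summable (fun n : ℕ => kF q lam (-((n:ℤ)+1))) := sFZ.comp_injective hinj2
  have s1 := sumB hq0 hq1 lam (lam+1)
  have s2 := sumB hq0 hq1 lam (lam-1)
  have s3 := sumB hq0 hq1 lam (1-lam)
  have s4 := sumB hq0 hq1 lam (-1-lam)
  have s1' := sumB hq0 hq1 (lam-1) (3/2)
  have s2' := sumB hq0 hq1 (lam-1) (-1/2)
  have s3' := sumB hq0 hq1 (lam+1) (3/2)
  have s4' := sumB hq0 hq1 (lam+1) (-1/2)
  have hkey : (∑' n : ℤ, qc q ((n : ℂ) ^ 2 / 2) * qc q (lam * (n : ℂ))) * (P * Q)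
      = (1 - (q:ℂ)^2) * ∑' m : ℕ, kU q lam m := by
    rw [← tsum_mul_right]
    calc ∑' n : ℤ, qc q ((n : ℂ) ^ 2 / 2) * qc q (lam * (n : ℂ)) * (P * Q)
        = ∑' n : ℤ, (kB q lam (lam+1) n - kB q lam (lam-1) n - kB q lam (1-lam) n
            + kB q lam (-1-lam) n) := tsum_congr (step1 q lam)
      _ = (∑' n : ℤ, kB q lam (lam+1) n) - (∑' n : ℤ, kB q lam (lam-1) n)
            - (∑' n : ℤ, kB q lam (1-lam) n) + (∑' n : ℤ, kB q lam (-1-lam) n) := by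
          rw [Summable.tsum_add ((s1.sub s2).sub s3) s4, Summable.tsum_sub (s1.sub s2) s3, Summable.tsum_sub s1 s2]
      _ = (∑' n : ℤ, kB q (lam-1) (3/2) n) - (∑' n : ℤ, kB q (lam-1) (-1/2) n)
            - (∑' n : ℤ, kB q (lam+1) (3/2) n) + (∑' n : ℤ, kB q (lam+1) (-1/2) n) := by
          rw [tsumB_down q lam (lam+1), tsumB_down q lam (lam-1), tsumB_up q lam (1-lam),
            tsumB_up q lam (-1-lam)]
          ring_nf
      _ = ∑' m : ℤ, kF q lam m := by
          rw [← Summable.tsum_sub s1' s2', ← Summable.tsum_sub (s1'.sub s2') s3',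
            ← Summable.tsum_add ((s1'.sub s2').sub s3') s4']
          exact tsum_congr fun m => rfl
      _ = (∑' n : ℕ, kF q lam ((n:ℤ)+1)) + kF q lam 0 + ∑' n : ℕ, kF q lam (-((n:ℤ)+1)) :=
          tsum_of_add_one_of_neg_add_one sF1 sF2
      _ = ∑' n : ℕ, (kF q lam ((n:ℤ)+1) + kF q lam (-((n:ℤ)+1))) := by
          rw [kF_zero, add_zero, ← Summable.tsum_add sF1 sF2]
      _ = ∑' n : ℕ, (1 - (q:ℂ)^2) * kU q lam n := tsum_congr (kFU hq0 lam)
      _ = (1 - (q:ℂ)^2) * ∑' m : ℕ, kU q lam m := tsum_mul_left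
  calc ∑' n : ℤ, qc q ((n : ℂ) ^ 2 / 2) * qc q (lam * (n : ℂ))
      = (1 - (q:ℂ)^2) * (∑' m : ℕ, kU q lam m) / (P * Q) := by
        rw [eq_div_iff hPQ, ← hkey]
    _ = (1 - (q:ℂ)^2) * ∑' m : ℕ, kU q lam m / (P * Q) := by
        rw [tsum_div_const, mul_div_assoc]
    _ = _ := by rw [tsum_congr hT]
end
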